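/- Fix constants a > 0, b > 0, let μ be a probability measure on ℂ and let β > 0 be such that |h| ≤ β for μ-almost every h. Then the MVU filter f_MVU = x/‖x‖² is not a minimizer of the average zeroth-order error probability: there exists a nonzero filter f ∈ ℂ^B such that ∫ P0(f, h) dμ(h) < ∫ P0(f_MVU, h) dμ(h). (Proposition 7: the MVU estimator is not optimal for minimizing the average [P_e]_0 under a prior channel distribution supported on a bounded set.) -/

import Mathlib

open MeasureTheory

/-- `φ(f) = fᴴ x = Σᵢ conj(fᵢ)·xᵢ`. -/
noncomputable def phi {B : ℕ} (x f : Fin B → ℂ) : ℂ :=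
  ∑ i, (starRingEnd ℂ) (f i) * x i

/-- Squared Euclidean norm `‖f‖² = Σᵢ |fᵢ|²`. -/
noncomputable def nsq {B : ℕ} (f : Fin B → ℂ) : ℝ :=
  ∑ i, Complex.normSq (f i)

/-- Zeroth-order symbol-estimate MSE of the ZF equalizer for channel `h`. -/
noncomputable def Mdc {B : ℕ} (σx2 σw2 : ℝ) (h : ℂ) (x f : Fin B → ℂ) : ℝ :=
  (σx2 * (Complex.normSq h * Complex.normSq (phi x f - 1) + σw2 * nsq f) + σw2) /
    (Complex.normSq h * Complex.normSq (phi x f) + σw2 * nsq f)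

/-- Standard Gaussian tail function `Q(u) = (1/√(2π)) ∫_u^∞ e^{−t²/2} dt`. -/
noncomputable def Qfun (u : ℝ) : ℝ :=
  (Real.sqrt (2 * Real.pi))⁻¹ * ∫ t in Set.Ioi u, Real.exp (-t ^ 2 / 2)

/-- Zeroth-order error probability `[P_e]₀ = a·Q(b·√(σx²/M_dc(f, h)))`. -/
noncomputable def P0dc {B : ℕ} (a b σx2 σw2 : ℝ) (h : ℂ) (x f : Fin B → ℂ) : ℝ :=
  a * Qfun (b * Real.sqrt (σx2 / Mdc σx2 σw2 h x f))

/-- The MVU channel-estimating filter `f_MVU = x / ‖x‖²`. -/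
noncomputable def fMVU {B : ℕ} (x : Fin B → ℂ) : Fin B → ℂ :=
  fun i => x i / (nsq x : ℂ)

-- auxiliary lemmas

lemma gauss_int : Integrable (fun t : ℝ => Real.exp (-t ^ 2 / 2)) := by
  have h := integrable_exp_neg_mul_sq (show (0:ℝ) < 1/2 by norm_num)
  have e : (fun t : ℝ => Real.exp (-t ^ 2 / 2)) = fun t : ℝ => Real.exp (-(1/2) * t ^ 2) := by
    funext t; ring_nf
  rw [e]; exact h

lemma Qfun_strictAnti : StrictAnti Qfun := by
  intro u v huv
  unfold Qfun
  have hsqrt : 0 < (Real.sqrt (2 * Real.pi))⁻¹ := by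
    have := Real.pi_pos
    positivity
  apply mul_lt_mul_of_pos_left _ hsqrt
  have hsplit : (∫ t in Set.Ioi u, Real.exp (-t ^ 2 / 2)) =
      (∫ t in Set.Ioc u v, Real.exp (-t ^ 2 / 2)) + ∫ t in Set.Ioi v, Real.exp (-t ^ 2 / 2) := by
    rw [← MeasureTheory.setIntegral_union (Set.Ioc_disjoint_Ioi le_rfl) measurableSet_Ioi
      gauss_int.integrableOn gauss_int.integrableOn, Set.Ioc_union_Ioi_eq_Ioi huv.le]
  have hpos : 0 < ∫ t in Set.Ioc u v, Real.exp (-t ^ 2 / 2) := by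
    rw [← intervalIntegral.integral_of_le huv.le]
    exact intervalIntegral.intervalIntegral_pos_of_pos gauss_int.intervalIntegrable (fun t => Real.exp_pos _) huv
  linarith

lemma Qfun_nonneg (u : ℝ) : 0 ≤ Qfun u := by
  unfold Qfun
  apply mul_nonneg (by positivity)
  apply MeasureTheory.setIntegral_nonneg measurableSet_Ioi
  intro t _; exact (Real.exp_pos _).le

noncomputable def Qbound : ℝ := (Real.sqrt (2 * Real.pi))⁻¹ * ∫ t, Real.exp (-t ^ 2 / 2)

lemma Qfun_le (u : ℝ) : Qfun u ≤ Qbound := by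
  unfold Qfun Qbound
  apply mul_le_mul_of_nonneg_left _ (by positivity)
  exact MeasureTheory.setIntegral_le_integral gauss_int
    (Filter.Eventually.of_forall fun t => (Real.exp_pos _).le)

lemma phi_scaled {B : ℕ} (x : Fin B → ℂ) (c : ℝ) :
    phi x (fun i => (c:ℂ) * x i) = ((c * nsq x : ℝ) : ℂ) := by
  unfold phi nsq
  push_cast
  rw [Finset.mul_sum]
  refine Finset.sum_congr rfl fun i _ => ?_
  rw [map_mul, Complex.conj_ofReal, mul_assoc,
    show (starRingEnd ℂ) (x i) * x i = x i * (starRingEnd ℂ) (x i) from mul_comm _ _,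
    Complex.mul_conj]

lemma nsq_scaled {B : ℕ} (x : Fin B → ℂ) (c : ℝ) :
    nsq (fun i => (c:ℂ) * x i) = c ^ 2 * nsq x := by
  unfold nsq
  rw [Finset.mul_sum]
  refine Finset.sum_congr rfl fun i _ => ?_
  rw [Complex.normSq_mul, Complex.normSq_ofReal]; ring

lemma Mdc_scaled {B : ℕ} (σx2 σw2 : ℝ) (h : ℂ) (x : Fin B → ℂ) (c : ℝ) :
    Mdc σx2 σw2 h x (fun i => (c:ℂ) * x i) =
      (σx2 * (Complex.normSq h * (c * nsq x - 1) ^ 2 + σw2 * (c ^ 2 * nsq x)) + σw2) /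
        (Complex.normSq h * (c * nsq x) ^ 2 + σw2 * (c ^ 2 * nsq x)) := by
  unfold Mdc
  rw [phi_scaled, nsq_scaled]
  have e1 : ((c * nsq x : ℝ) : ℂ) - 1 = ((c * nsq x - 1 : ℝ) : ℂ) := by push_cast; ring
  rw [e1, Complex.normSq_ofReal, Complex.normSq_ofReal]
  ring_nf

set_option maxHeartbeats 2000000 in
/-- Proposition 7: the MVU estimator is not optimal for minimizing the average
zeroth-order error probability under a prior channel distribution supported on
a bounded set. -/
theorem mvu_not_optimal_average_zeroth_order_pe
    (B : ℕ) (hB : 1 ≤ B) (x : Fin B → ℂ) (hx : x ≠ 0)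
    (σx2 σw2 : ℝ) (hσx : 0 < σx2) (hσw : 0 < σw2)
    (a b : ℝ) (ha : 0 < a) (hb : 0 < b)
    (μ : Measure ℂ) [IsProbabilityMeasure μ]
    (β : ℝ) (hβ : 0 < β) (hsupp : ∀ᵐ h ∂μ, ‖h‖ ≤ β) :
    ∃ f : Fin B → ℂ, f ≠ 0 ∧
      (∫ h, P0dc a b σx2 σw2 h x f ∂μ) < ∫ h, P0dc a b σx2 σw2 h x (fMVU x) ∂μ := by
  -- setup
  have hs : 0 < nsq x := by
    obtain ⟨i, hi⟩ := Function.ne_iff.mp hx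
    have h1 : 0 < Complex.normSq (x i) := Complex.normSq_pos.mpr hi
    have h2 : ∀ j ∈ Finset.univ, (0:ℝ) ≤ Complex.normSq (x j) :=
      fun j _ => Complex.normSq_nonneg _
    exact Finset.sum_pos' h2 ⟨i, Finset.mem_univ i, h1⟩
  set s := nsq x with hs_def
  set e : ℝ := σw2 / (σx2 * β ^ 2) with he_def
  have he : 0 < e := by positivity
  set t : ℝ := 1 + e with ht_def
  have ht1 : 1 < t := by linarith
  set c : ℝ := t / s with hc_def
  have hc : 0 < c := by positivity
  refine ⟨fun i => (c:ℂ) * x i, ?_, ?_⟩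
  · -- nonzero
    obtain ⟨i, hi⟩ := Function.ne_iff.mp hx
    intro hf
    have := congrFun hf i
    simp only [Pi.zero_apply, mul_eq_zero] at this
    rcases this with h1 | h1
    · exact hc.ne' (Complex.ofReal_eq_zero.mp h1)
    · exact hi h1
  -- fMVU as scaled
  have hfm : fMVU x = fun i => (((1:ℝ)/s : ℝ):ℂ) * x i := by
    funext i
    unfold fMVU
    rw [← hs_def]
    push_cast
    ring
  -- pointwise Mdc facts
  have hMf_pos : ∀ h : ℂ, 0 < Mdc σx2 σw2 h x (fun i => (c:ℂ) * x i) := by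
    intro h
    rw [Mdc_scaled, ← hs_def]
    have hu := Complex.normSq_nonneg h
    apply div_pos
    · have h1 := mul_nonneg hσx.le (add_nonneg (mul_nonneg hu (sq_nonneg (c*s-1)))
        (mul_nonneg hσw.le (mul_nonneg (sq_nonneg c) hs.le)))
      linarith
    · have h1 : 0 < σw2 * (c ^ 2 * s) := by positivity
      have h2 := mul_nonneg hu (sq_nonneg (c*s))
      linarith
  have hMm_pos : ∀ h : ℂ, 0 < Mdc σx2 σw2 h x (fMVU x) := by
    intro h
    rw [hfm, Mdc_scaled, ← hs_def]
    have hu := Complex.normSq_nonneg h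
    have h1 : (1:ℝ)/s * s = 1 := by field_simp
    apply div_pos
    · have h1 := mul_nonneg hσx.le (add_nonneg (mul_nonneg hu (sq_nonneg ((1:ℝ)/s*s-1)))
        (mul_nonneg hσw.le (mul_nonneg (sq_nonneg ((1:ℝ)/s)) hs.le)))
      linarith
    · have h2 : 0 < σw2 * (((1:ℝ)/s) ^ 2 * s) := by positivity
      have h3 := mul_nonneg hu (sq_nonneg ((1:ℝ)/s*s))
      linarith
  have hkey : ∀ h : ℂ, ‖h‖ ≤ β →
      Mdc σx2 σw2 h x (fun i => (c:ℂ) * x i) < Mdc σx2 σw2 h x (fMVU x) := by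
    intro h hh
    rw [hfm, Mdc_scaled, Mdc_scaled, ← hs_def]
    have hu : 0 ≤ Complex.normSq h := Complex.normSq_nonneg h
    set u := Complex.normSq h with hu_def
    have huβ : u ≤ β ^ 2 := by
      rw [hu_def, ← Complex.sq_norm]
      exact pow_le_pow_left₀ (norm_nonneg h) hh 2
    have hs0 : s ≠ 0 := ne_of_gt hs
    have hcs : c * s = t := by rw [hc_def]; field_simp
    have hee : σx2 * β ^ 2 * e = σw2 := by rw [he_def]; field_simp
    have ht0 : 0 < t := by linarith
    set w : ℝ := (1:ℝ)/s with hw_def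
    have hw : 0 < w := by rw [hw_def]; positivity
    have hws : w * s = 1 := by rw [hw_def]; field_simp
    have hw2 : w ^ 2 * s = w := by rw [hw_def]; field_simp
    have hv : c ^ 2 * s = t ^ 2 * w := by
      rw [hw_def, ← hcs]; field_simp
    rw [hcs, hws, hw2, hv]
    clear_value s e t c u w
    have hD2 : 0 < u * 1 ^ 2 + σw2 * w := by
      have := mul_pos hσw hw; nlinarith
    have hD1 : 0 < u * t ^ 2 + σw2 * (t ^ 2 * w) := by
      have h1 : 0 < σw2 * (t ^ 2 * w) := mul_pos hσw (mul_pos (pow_pos ht0 2) hw)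
      nlinarith [mul_nonneg hu (sq_nonneg t)]
    rw [div_lt_div_iff₀ hD1 hD2]
    have hcore : σx2 * u * (t - 1) ^ 2 < σw2 * (t ^ 2 - 1) := by
      have h3 := mul_le_mul_of_nonneg_right (mul_le_mul_of_nonneg_left huβ hσx.le) he.le
      have h2 : σx2 * u * e ≤ σw2 := by linarith [h3, hee]
      have h4 := mul_le_mul_of_nonneg_right h2 he.le
      have h5 : 0 < σw2 * e := mul_pos hσw he
      have h6 : 0 ≤ σw2 * e ^ 2 := by positivity
      rw [ht_def]
      nlinarith [h4, h5, h6]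
    have hfac : 0 < u + σw2 * w := by linarith [mul_pos hσw hw, hu]
    have hid : (σx2 * (u * (1 - 1) ^ 2 + σw2 * w) + σw2) * (u * t ^ 2 + σw2 * (t ^ 2 * w))
        - (σx2 * (u * (t - 1) ^ 2 + σw2 * (t ^ 2 * w)) + σw2) * (u * 1 ^ 2 + σw2 * w)
        = (u + σw2 * w) * (σw2 * (t ^ 2 - 1) - σx2 * u * (t - 1) ^ 2) := by ring
    have hprod : 0 < (u + σw2 * w) * (σw2 * (t ^ 2 - 1) - σx2 * u * (t - 1) ^ 2) :=
      mul_pos hfac (by linarith)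
    linarith [hid, hprod]
  -- pointwise P0 inequality
  have hP0lt : ∀ h : ℂ, ‖h‖ ≤ β →
      P0dc a b σx2 σw2 h x (fun i => (c:ℂ) * x i) < P0dc a b σx2 σw2 h x (fMVU x) := by
    intro h hh
    unfold P0dc
    apply mul_lt_mul_of_pos_left _ ha
    apply Qfun_strictAnti
    apply mul_lt_mul_of_pos_left _ hb
    apply Real.sqrt_lt_sqrt (div_pos hσx (hMm_pos h)).le
    exact div_lt_div_of_pos_left hσx (hMf_pos h) (hkey h hh)
  -- measurability
  have hQmeas : Measurable Qfun := Qfun_strictAnti.antitone.measurable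
  have hMdcMeas : ∀ g : Fin B → ℂ, Measurable (fun h : ℂ => Mdc σx2 σw2 h x g) := by
    intro g
    unfold Mdc
    have hn : Measurable (Complex.normSq : ℂ → ℝ) := Complex.continuous_normSq.measurable
    apply Measurable.div
    · apply Measurable.add_const
      apply Measurable.const_mul
      exact (hn.mul_const _).add_const _
    · exact (hn.mul_const _).add_const _
  have hPmeas : ∀ g : Fin B → ℂ, Measurable (fun h : ℂ => P0dc a b σx2 σw2 h x g) := by
    intro g
    unfold P0dc
    apply Measurable.const_mul
    apply hQmeas.comp
    apply Measurable.const_mul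
    exact (measurable_const.div (hMdcMeas g)).sqrt
  -- integrability
  have hPint : ∀ g : Fin B → ℂ, Integrable (fun h : ℂ => P0dc a b σx2 σw2 h x g) μ := by
    intro g
    apply Integrable.mono' (integrable_const (a * Qbound)) (hPmeas g).aestronglyMeasurable
    refine Filter.Eventually.of_forall fun h => ?_
    unfold P0dc
    rw [Real.norm_eq_abs, abs_of_nonneg (mul_nonneg ha.le (Qfun_nonneg _))]
    exact mul_le_mul_of_nonneg_left (Qfun_le _) ha.le
  -- integral inequality
  set F := fun h : ℂ => P0dc a b σx2 σw2 h x (fun i => (c:ℂ) * x i) with hF_def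
  set G := fun h : ℂ => P0dc a b σx2 σw2 h x (fMVU x) with hG_def
  have hFint : Integrable F μ := hPint _
  have hGint : Integrable G μ := hPint _
  have hae : ∀ᵐ h ∂μ, F h < G h := hsupp.mono fun h hh => hP0lt h hh
  have hsub : Integrable (fun h => G h - F h) μ := hGint.sub hFint
  have hpos : 0 < ∫ h, (G h - F h) ∂μ := by
    rw [integral_pos_iff_support_of_nonneg_ae (hae.mono fun h hh => by
      simp only [Pi.zero_apply]; linarith) hsub]
    by_contra hzero
    push_neg at hzero
    have hz : μ (Function.support fun h => G h - F h) = 0 := le_antisymm hzero zero_le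
    have h1 : ∀ᵐ h ∂μ, h ∉ Function.support fun h => G h - F h :=
      measure_eq_zero_iff_ae_notMem.mp hz
    have h2 : ∀ᵐ h ∂μ, h ∈ Function.support fun h => G h - F h :=
      hae.mono fun h hh => by
        simp only [Function.mem_support]
        exact sub_ne_zero.mpr (ne_of_gt hh)
    have hne : μ ≠ 0 := IsProbabilityMeasure.ne_zero μ
    have : (ae μ).NeBot := ae_neBot.mpr hne
    obtain ⟨h0, hm, hn⟩ := (h2.and h1).exists
    exact hn hm
  have heq : ∫ h, (G h - F h) ∂μ = (∫ h, G h ∂μ) - ∫ h, F h ∂μ := integral_sub hGint hFint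
  rw [heq] at hpos
  linarith
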